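/- arXiv:2012.12869 — 5 statements merged into one kernel-verified Lean document; each statement's English description precedes it below -/
import Mathlib

section
/- For real numbers 0 < a < b, the quantity b + a + (a·b/(b − a))·log(b/a) satisfies b ≤ b + a + (a·b/(b − a))·log(b/a) ≤ 3b. -/
theorem stmt_1 (a b : ℝ) (ha : 0 < a) (hab : a < b) :
    b ≤ b + a + (a * b / (b - a)) * Real.log (b / a) ∧
    b + a + (a * b / (b - a)) * Real.log (b / a) ≤ 3 * b := by
  have hb : 0 < b := ha.trans hab
  have hba : 0 < b - a := by linarith
  have hq : 1 < b / a := (one_lt_div ha).2 hab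
  have hlogpos : 0 < Real.log (b / a) := Real.log_pos hq
  have hcoef : 0 < a * b / (b - a) := div_pos (mul_pos ha hb) hba
  constructor
  · nlinarith [mul_pos hcoef hlogpos]
  · have hlog : Real.log (b / a) ≤ b / a - 1 := Real.log_le_sub_one_of_pos (by positivity)
    have h1 : (a * b / (b - a)) * Real.log (b / a) ≤ (a * b / (b - a)) * (b / a - 1) :=
      mul_le_mul_of_nonneg_left hlog hcoef.le
    have h2 : (a * b / (b - a)) * (b / a - 1) = b := by
      field_simp
    linarith
end

section
/- For any two unit vectors s, t ∈ S¹, the rotation numbers ρ_s and ρ_t on the universal cover of Sp(2,ℝ) satisfy |ρ_s(Φ) − ρ_t(Φ)| ≤ 1 for all Φ. -/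
/-- Rotation by angle `x` as a `2 × 2` matrix. -/
noncomputable def rotMat (x : ℝ) : Matrix (Fin 2) (Fin 2) ℝ :=
  !![Real.cos x, -Real.sin x; Real.sin x, Real.cos x]

/-- Euclidean norm of a vector in `ℝ²`. -/
noncomputable def vnorm (v : Fin 2 → ℝ) : ℝ := Real.sqrt (v 0 ^ 2 + v 1 ^ 2)

/-- A path in `Sp(2,ℝ) = SL(2,ℝ)` starting at the identity, representing an element of
the universal cover of `Sp(2,ℝ)`. -/
def IsSpPath (Φ : ℝ → Matrix (Fin 2) (Fin 2) ℝ) : Prop :=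
  ContinuousOn Φ (Set.Icc 0 1) ∧ Φ 0 = 1 ∧ ∀ t ∈ Set.Icc (0:ℝ) 1, (Φ t).det = 1

/-- `θ` is the lift, via the covering `ℝ → S¹`, `θ ↦ e^{2πiθ}·s`, of the circle-valued map
`t ↦ Φ(t)s/|Φ(t)s|`, normalized by `θ(0) = 0`.  In particular `θ(1) = ρ_s(Φ)` is the
rotation number of `Φ` relative to the unit vector `s`. -/
def IsRotLift (Φ : ℝ → Matrix (Fin 2) (Fin 2) ℝ) (s : Fin 2 → ℝ) (θ : ℝ → ℝ) : Prop :=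
  ContinuousOn θ (Set.Icc 0 1) ∧ θ 0 = 0 ∧ ∀ t ∈ Set.Icc (0:ℝ) 1,
    (Φ t).mulVec s = vnorm ((Φ t).mulVec s) • (rotMat (2 * Real.pi * θ t)).mulVec s



-- aux lemmas
lemma cross_mulVec (A : Matrix (Fin 2) (Fin 2) ℝ) (v w : Fin 2 → ℝ) :
    (A.mulVec v) 0 * (A.mulVec w) 1 - (A.mulVec v) 1 * (A.mulVec w) 0
      = A.det * (v 0 * w 1 - v 1 * w 0) := by
  simp [Matrix.mulVec, dotProduct, Matrix.det_fin_two, Fin.sum_univ_two]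
  ring

lemma vnorm_sq (v : Fin 2 → ℝ) (h : vnorm v = 1) : v 0 ^ 2 + v 1 ^ 2 = 1 := by
  have := congrArg (· ^ 2) h
  simpa [vnorm, Real.sq_sqrt (by positivity : (0:ℝ) ≤ v 0 ^ 2 + v 1 ^ 2)] using this

lemma vnorm_pos_aux (A : Matrix (Fin 2) (Fin 2) ℝ) (hA : A.det = 1)
    (v : Fin 2 → ℝ) (hv : vnorm v = 1) : 0 < vnorm (A.mulVec v) := by
  have hv2 := vnorm_sq v hv
  have hvne : A.mulVec v ≠ 0 := by
    intro h0
    have hu : IsUnit A.det := by rw [hA]; exact isUnit_one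
    have : v = 0 := by
      have h1 : A⁻¹.mulVec (A.mulVec v) = v := by
        rw [Matrix.mulVec_mulVec, Matrix.nonsing_inv_mul A hu, Matrix.one_mulVec]
      rw [h0] at h1
      simpa [Matrix.mulVec_zero] using h1.symm
    rw [this] at hv2; simp at hv2
  have hne : A.mulVec v 0 ≠ 0 ∨ A.mulVec v 1 ≠ 0 := by
    by_contra h
    push_neg at h
    exact hvne (funext fun i => by fin_cases i <;> simp [h.1, h.2])
  have : 0 < (A.mulVec v) 0 ^ 2 + (A.mulVec v) 1 ^ 2 := by
    rcases hne with h | h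
    · have : 0 < (A.mulVec v) 0 ^ 2 := by positivity
      nlinarith [sq_nonneg (A.mulVec v 1)]
    · have : 0 < (A.mulVec v) 1 ^ 2 := by positivity
      nlinarith [sq_nonneg (A.mulVec v 0)]
  exact Real.sqrt_pos.mpr this

lemma exists_cos_sin (C D : ℝ) (h : C ^ 2 + D ^ 2 = 1) :
    ∃ δ : ℝ, Real.cos δ = D ∧ Real.sin δ = C := by
  set z : ℂ := ⟨D, C⟩ with hz
  have habs : ‖z‖ = 1 := by
    rw [Complex.norm_def, Complex.normSq_mk, show D * D + C * C = 1 by nlinarith]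
    exact Real.sqrt_one
  have hz0 : z ≠ 0 := by
    intro h0; rw [h0] at habs; simp at habs
  refine ⟨Complex.arg z, ?_, ?_⟩
  · rw [Complex.cos_arg hz0, habs]; simp [hz]
  · rw [Complex.sin_arg, habs]; simp [hz]

lemma rot_cross (a b : ℝ) (s t : Fin 2 → ℝ) :
    ((rotMat a).mulVec s) 0 * ((rotMat b).mulVec t) 1
      - ((rotMat a).mulVec s) 1 * ((rotMat b).mulVec t) 0
    = (s 0 * t 1 - s 1 * t 0) * Real.cos (a - b)
      - (s 0 * t 0 + s 1 * t 1) * Real.sin (a - b) := by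
  rw [Real.cos_sub, Real.sin_sub]
  simp [rotMat, Matrix.mulVec, dotProduct, Fin.sum_univ_two,
    Matrix.cons_val_zero, Matrix.cons_val_one, Matrix.vecHead, Matrix.vecTail]
  ring

/-- For any two unit vectors `s, t ∈ S¹`, the rotation numbers relative to `s` and `t`
differ by at most `1`: `|ρ_s(Φ) − ρ_t(Φ)| ≤ 1`. -/
theorem stmt_7 (Φ : ℝ → Matrix (Fin 2) (Fin 2) ℝ) (hΦ : IsSpPath Φ)
    (s t : Fin 2 → ℝ) (hs : vnorm s = 1) (ht : vnorm t = 1)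
    (θs θt : ℝ → ℝ) (h1 : IsRotLift Φ s θs) (h2 : IsRotLift Φ t θt) :
    |θs 1 - θt 1| ≤ 1 := by
  obtain ⟨hΦc, hΦ0, hdet⟩ := hΦ
  obtain ⟨hθsc, hθs0, hes⟩ := h1
  obtain ⟨hθtc, hθt0, het⟩ := h2
  have hpi := Real.pi_pos
  have hs2 := vnorm_sq s hs
  have ht2 := vnorm_sq t ht
  have hCD : (s 0 * t 1 - s 1 * t 0) ^ 2 + (s 0 * t 0 + s 1 * t 1) ^ 2 = 1 := by nlinarith
  obtain ⟨δ, hcos, hsin⟩ := exists_cos_sin (s 0 * t 1 - s 1 * t 0) (s 0 * t 0 + s 1 * t 1) hCD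
  set w : ℝ → ℝ := fun u => δ - (2 * Real.pi * θs u - 2 * Real.pi * θt u) with hw
  have hNs : ∀ u ∈ Set.Icc (0:ℝ) 1, 0 < vnorm ((Φ u).mulVec s) :=
    fun u hu => vnorm_pos_aux _ (hdet u hu) s hs
  have hNt : ∀ u ∈ Set.Icc (0:ℝ) 1, 0 < vnorm ((Φ u).mulVec t) :=
    fun u hu => vnorm_pos_aux _ (hdet u hu) t ht
  have key : ∀ u ∈ Set.Icc (0:ℝ) 1,
      vnorm ((Φ u).mulVec s) * vnorm ((Φ u).mulVec t) * Real.sin (w u)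
        = s 0 * t 1 - s 1 * t 0 := by
    intro u hu
    have e1 := hes u hu
    have e2 := het u hu
    have hcross := cross_mulVec (Φ u) s t
    rw [hdet u hu, one_mul] at hcross
    rw [e1, e2] at hcross
    simp only [Pi.smul_apply, smul_eq_mul] at hcross
    have hsinw : Real.sin (w u)
        = (s 0 * t 1 - s 1 * t 0) * Real.cos (2 * Real.pi * θs u - 2 * Real.pi * θt u)
          - (s 0 * t 0 + s 1 * t 1) * Real.sin (2 * Real.pi * θs u - 2 * Real.pi * θt u) := by
      simp only [hw]
      rw [Real.sin_sub, hcos, hsin]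
    rw [hsinw, ← rot_cross]
    linear_combination hcross
  have hwc : ContinuousOn w (Set.uIcc 0 1) := by
    rw [Set.uIcc_of_le (zero_le_one)]
    exact continuousOn_const.sub
      ((continuousOn_const.mul hθsc).sub (continuousOn_const.mul hθtc))
  have hsub := intermediate_value_uIcc hwc
  have hmem : ∀ x, min (w 0) (w 1) ≤ x → x ≤ max (w 0) (w 1) → x ∈ Set.uIcc (w 0) (w 1) := by
    intro x hx1 hx2
    rcases le_total (w 0) (w 1) with h | h
    · rw [Set.uIcc_of_le h]
      exact Set.mem_Icc.mpr ⟨by simpa [min_eq_left h] using hx1, by simpa [max_eq_right h] using hx2⟩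
    · rw [Set.uIcc_of_ge h]
      exact Set.mem_Icc.mpr ⟨by simpa [min_eq_right h] using hx1, by simpa [max_eq_left h] using hx2⟩
  by_contra hcon
  push_neg at hcon
  have hw0 : w 0 = δ := by simp [hw, hθs0, hθt0]
  have habs : |w 1 - w 0| = 2 * Real.pi * |θs 1 - θt 1| := by
    have h10 : w 1 - w 0 = -(2 * Real.pi * (θs 1 - θt 1)) := by rw [hw0]; simp only [hw]; ring
    rw [h10, abs_neg, abs_mul, abs_of_pos (by positivity : (0:ℝ) < 2 * Real.pi)]
  have hbig : 2 * Real.pi < |w 1 - w 0| := by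
    rw [habs]; nlinarith
  set a := min (w 0) (w 1) with ha
  set b := max (w 0) (w 1) with hb
  have hba : 2 * Real.pi < b - a := by
    rw [ha, hb, max_sub_min_eq_abs]; exact hbig
  set k : ℤ := ⌈a / Real.pi⌉ with hk
  have hk1 : a ≤ (k : ℝ) * Real.pi := by
    rw [hk]
    exact (div_le_iff₀ hpi).mp (Int.le_ceil _)
  have hk2 : (k : ℝ) * Real.pi ≤ a + Real.pi := by
    have h' : (k : ℝ) < a / Real.pi + 1 := by
      rw [hk]; exact Int.ceil_lt_add_one _
    have h'' : ((k : ℝ) - 1) * Real.pi < a := (lt_div_iff₀ hpi).mp (by linarith)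
    nlinarith
  obtain ⟨u₁, hu₁, hwu₁⟩ := hsub (hmem ((k:ℝ) * Real.pi) hk1 (by linarith))
  rw [Set.uIcc_of_le (zero_le_one)] at hu₁
  have hC0 : s 0 * t 1 - s 1 * t 0 = 0 := by
    have hk0 := key u₁ hu₁
    rw [hwu₁, Real.sin_int_mul_pi] at hk0
    linarith [hk0]
  obtain ⟨u₂, hu₂, hwu₂⟩ := hsub (hmem ((k:ℝ) * Real.pi + Real.pi / 2)
    (by linarith) (by linarith))
  rw [Set.uIcc_of_le (zero_le_one)] at hu₂
  have h2' := key u₂ hu₂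
  rw [hwu₂, Real.sin_add_pi_div_two, hC0] at h2'
  have hcosne : Real.cos ((k:ℝ) * Real.pi) ≠ 0 := by
    intro h0
    have hac := Real.abs_cos_int_mul_pi k
    rw [h0] at hac
    simp at hac
  have hp1 := hNs u₂ hu₂
  have hp2 := hNt u₂ hu₂
  rcases mul_eq_zero.mp h2' with h | h
  · rcases mul_eq_zero.mp h with h' | h' <;> linarith
  · exact hcosne h
end

section
/- The map ρ_s on the universal cover of Sp(2,ℝ) is a quasimorphism with defect at most 1: |ρ_s(ΨΦ) − ρ_s(Ψ) − ρ_s(Φ)| ≤ 1 for all Ψ, Φ and all unit vectors s. -/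
namespace Stmt8Aux

/-- The cross product (determinant) of two plane vectors. -/
def crossv (v w : Fin 2 → ℝ) : ℝ := v 0 * w 1 - v 1 * w 0

/-- The dot product of two plane vectors. -/
def dotv (v w : Fin 2 → ℝ) : ℝ := v 0 * w 0 + v 1 * w 1

lemma mulVec_apply0 (A : Matrix (Fin 2) (Fin 2) ℝ) (v : Fin 2 → ℝ) :
    (A.mulVec v) 0 = A 0 0 * v 0 + A 0 1 * v 1 := by
  simp [Matrix.mulVec, dotProduct, Fin.sum_univ_two]

lemma mulVec_apply1 (A : Matrix (Fin 2) (Fin 2) ℝ) (v : Fin 2 → ℝ) :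
    (A.mulVec v) 1 = A 1 0 * v 0 + A 1 1 * v 1 := by
  simp [Matrix.mulVec, dotProduct, Fin.sum_univ_two]

lemma crossv_mulVec (A : Matrix (Fin 2) (Fin 2) ℝ) (v w : Fin 2 → ℝ) :
    crossv (A.mulVec v) (A.mulVec w) = A.det * crossv v w := by
  simp [crossv, mulVec_apply0, mulVec_apply1, Matrix.det_fin_two]; ring

lemma rot_apply00 (x : ℝ) : rotMat x 0 0 = Real.cos x := by simp [rotMat]
lemma rot_apply01 (x : ℝ) : rotMat x 0 1 = -Real.sin x := by simp [rotMat]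
lemma rot_apply10 (x : ℝ) : rotMat x 1 0 = Real.sin x := by simp [rotMat]
lemma rot_apply11 (x : ℝ) : rotMat x 1 1 = Real.cos x := by simp [rotMat]

lemma crossv_rot (x y : ℝ) (s : Fin 2 → ℝ) :
    crossv ((rotMat x).mulVec s) ((rotMat y).mulVec s)
      = (s 0 ^ 2 + s 1 ^ 2) * Real.sin (y - x) := by
  simp [crossv, mulVec_apply0, mulVec_apply1, rot_apply00, rot_apply01, rot_apply10,
    rot_apply11, Real.sin_sub]
  ring

lemma dotv_rot (x y : ℝ) (s : Fin 2 → ℝ) :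
    dotv ((rotMat x).mulVec s) ((rotMat y).mulVec s)
      = (s 0 ^ 2 + s 1 ^ 2) * Real.cos (y - x) := by
  simp [dotv, mulVec_apply0, mulVec_apply1, rot_apply00, rot_apply01, rot_apply10,
    rot_apply11, Real.cos_sub]
  ring

lemma crossv_id_rot (y : ℝ) (s : Fin 2 → ℝ) :
    crossv s ((rotMat y).mulVec s) = (s 0 ^ 2 + s 1 ^ 2) * Real.sin y := by
  simp [crossv, mulVec_apply0, mulVec_apply1, rot_apply00, rot_apply01, rot_apply10,
    rot_apply11]
  ring

lemma crossv_smul_smul (a b : ℝ) (v w : Fin 2 → ℝ) :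
    crossv (a • v) (b • w) = a * b * crossv v w := by
  simp [crossv, Pi.smul_apply, smul_eq_mul]; ring

lemma crossv_smul_right (b : ℝ) (v w : Fin 2 → ℝ) :
    crossv v (b • w) = b * crossv v w := by
  simp [crossv, Pi.smul_apply, smul_eq_mul]; ring

lemma vnorm_sq_one {s : Fin 2 → ℝ} (hs : vnorm s = 1) : s 0 ^ 2 + s 1 ^ 2 = 1 := by
  have h := congrArg (· ^ 2) hs
  simpa [vnorm, Real.sq_sqrt (by positivity : (0:ℝ) ≤ s 0 ^ 2 + s 1 ^ 2)] using h

lemma norm_pos {A : Matrix (Fin 2) (Fin 2) ℝ} (hA : A.det = 1) {s : Fin 2 → ℝ}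
    (hs : s 0 ^ 2 + s 1 ^ 2 = 1) : 0 < vnorm (A.mulVec s) := by
  rw [vnorm]
  apply Real.sqrt_pos.mpr
  rcases lt_or_eq_of_le
      (by positivity : (0:ℝ) ≤ (A.mulVec s) 0 ^ 2 + (A.mulVec s) 1 ^ 2) with h | h
  · exact h
  · exfalso
    have h0 : (A.mulVec s) 0 = 0 := by
      nlinarith [sq_nonneg ((A.mulVec s) 0), sq_nonneg ((A.mulVec s) 1)]
    have h1 : (A.mulVec s) 1 = 0 := by
      nlinarith [sq_nonneg ((A.mulVec s) 0), sq_nonneg ((A.mulVec s) 1)]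
    rw [mulVec_apply0] at h0
    rw [mulVec_apply1] at h1
    rw [Matrix.det_fin_two] at hA
    have hs0 : s 0 = 0 := by linear_combination A 1 1 * h0 - A 0 1 * h1 - s 0 * hA
    have hs1 : s 1 = 0 := by linear_combination A 0 0 * h1 - A 1 0 * h0 - s 1 * hA
    rw [hs0, hs1] at hs; norm_num at hs

lemma rot_dir_eq {x y : ℝ} {s : Fin 2 → ℝ} (hs : s 0 ^ 2 + s 1 ^ 2 = 1)
    (h : (rotMat x).mulVec s = (rotMat y).mulVec s) :
    ∃ n : ℤ, y - x = n * (2 * Real.pi) := by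
  have h1 := dotv_rot x y s
  rw [← h] at h1
  have h2 := dotv_rot x x s
  rw [sub_self, Real.cos_zero, hs, one_mul] at h2
  rw [hs, one_mul, h2] at h1
  obtain ⟨n, hn⟩ := (Real.cos_eq_one_iff (y - x)).mp h1.symm
  exact ⟨n, hn.symm⟩

lemma half_not_int (n k : ℤ) (h : (n:ℝ) = k + 1/2) : False := by
  have h1 : (2*n : ℝ) = 2*k + 1 := by linarith
  have : (2*n : ℤ) = 2*k + 1 := by exact_mod_cast h1
  omega

lemma int_valued_eq {f : ℝ → ℝ} {a b : ℝ} (hab : a ≤ b)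
    (hf : ContinuousOn f (Set.Icc a b))
    (hint : ∀ t ∈ Set.Icc a b, ∃ n : ℤ, f t = n) : f b = f a := by
  by_contra hne
  obtain ⟨m, hm⟩ := hint a ⟨le_refl a, hab⟩
  obtain ⟨k, hk⟩ := hint b ⟨hab, le_refl b⟩
  rcases lt_or_gt_of_ne hne with h | h
  · have hki : k < m := by
      have : (k:ℝ) < m := by rw [← hm, ← hk]; exact h
      exact_mod_cast this
    have hkm : (k:ℝ) + 1 ≤ m := by exact_mod_cast hki
    have hc : (k:ℝ) + 1/2 ∈ Set.Icc (f b) (f a) := by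
      refine ⟨by rw [hk]; linarith, by rw [hm]; linarith⟩
    obtain ⟨t, ht, hft⟩ := intermediate_value_Icc' hab hf hc
    obtain ⟨n, hn⟩ := hint t ht
    rw [hn] at hft
    exact half_not_int n k hft
  · have hki : m < k := by
      have : (m:ℝ) < k := by rw [← hm, ← hk]; exact h
      exact_mod_cast this
    have hkm : (m:ℝ) + 1 ≤ k := by exact_mod_cast hki
    have hc : (m:ℝ) + 1/2 ∈ Set.Icc (f a) (f b) := by
      refine ⟨by rw [hm]; linarith, by rw [hk]; linarith⟩
    obtain ⟨t, ht, hft⟩ := intermediate_value_Icc hab hf hc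
    obtain ⟨n, hn⟩ := hint t ht
    rw [hn] at hft
    exact half_not_int n m hft

lemma no_half_int {f : ℝ → ℝ} {a b : ℝ} (hab : a ≤ b)
    (hf : ContinuousOn f (Set.Icc a b))
    (h : ∀ t ∈ Set.Icc a b, ∀ n : ℤ, 2 * f t ≠ n) : |f b - f a| ≤ 1 := by
  by_contra h1
  push_neg at h1
  have hg : ContinuousOn (fun t => 2 * f t) (Set.Icc a b) := continuousOn_const.mul hf
  rcases le_or_gt (f a) (f b) with h2 | h2
  · have hd : 1 < f b - f a := by rwa [abs_of_nonneg (by linarith)] at h1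
    set k : ℤ := ⌊2 * f a⌋ + 1 with hkdef
    have hk1 : 2 * f a < (k:ℝ) := by push_cast [hkdef]; exact Int.lt_floor_add_one _
    have hk2 : (k:ℝ) ≤ 2 * f a + 1 := by
      push_cast [hkdef]; linarith [Int.floor_le (2 * f a)]
    have hc : (k:ℝ) ∈ Set.Icc (2 * f a) (2 * f b) := ⟨le_of_lt hk1, by linarith⟩
    obtain ⟨t, ht, hft⟩ := intermediate_value_Icc hab hg hc
    exact h t ht k hft
  · have hd : 1 < f a - f b := by
      rw [abs_sub_comm] at h1
      rwa [abs_of_nonneg (by linarith)] at h1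
    set k : ℤ := ⌊2 * f b⌋ + 1 with hkdef
    have hk1 : 2 * f b < (k:ℝ) := by push_cast [hkdef]; exact Int.lt_floor_add_one _
    have hk2 : (k:ℝ) ≤ 2 * f b + 1 := by
      push_cast [hkdef]; linarith [Int.floor_le (2 * f b)]
    have hc : (k:ℝ) ∈ Set.Icc (2 * f b) (2 * f a) := ⟨le_of_lt hk1, by linarith⟩
    obtain ⟨t, ht, hft⟩ := intermediate_value_Icc' hab hg hc
    exact h t ht k hft

end Stmt8Aux

open Stmt8Aux Real in
/-- `ρ_s` is a quasimorphism on the universal cover of `Sp(2,ℝ)` with defect at most `1`: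
`|ρ_s(ΨΦ) − ρ_s(Ψ) − ρ_s(Φ)| ≤ 1`, where the product `ΨΦ` is represented by the
concatenation of `Φ` with the path `t ↦ Ψ(t)·Φ(1)`. -/
theorem stmt_8 (Φ Ψ : ℝ → Matrix (Fin 2) (Fin 2) ℝ)
    (hΦ : IsSpPath Φ) (hΨ : IsSpPath Ψ)
    (s : Fin 2 → ℝ) (hs : vnorm s = 1)
    (θΦ θΨ θP : ℝ → ℝ)
    (h1 : IsRotLift Φ s θΦ)
    (h2 : IsRotLift Ψ s θΨ)
    (h3 : IsRotLift (fun t => if t ≤ 1/2 then Φ (2 * t) else Ψ (2 * t - 1) * Φ 1) s θP) :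
    |θP 1 - θΨ 1 - θΦ 1| ≤ 1 := by
  obtain ⟨hΦc, hΦ0, hΦdet⟩ := hΦ
  obtain ⟨hΨc, hΨ0, hΨdet⟩ := hΨ
  obtain ⟨hθΦc, hθΦ0, hθΦ⟩ := h1
  obtain ⟨hθΨc, hθΨ0, hθΨ⟩ := h2
  obtain ⟨hθPc, hθP0, hθP⟩ := h3
  have hs2 : s 0 ^ 2 + s 1 ^ 2 = 1 := vnorm_sq_one hs
  have hpi : Real.pi ≠ 0 := Real.pi_ne_zero
  -- Step 1: θP (1/2) = θΦ 1
  have hint1 : ∀ t ∈ Set.Icc (0:ℝ) (1/2), ∃ n : ℤ, θP t - θΦ (2*t) = n := by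
    intro t ht
    have ht1 : t ∈ Set.Icc (0:ℝ) 1 := ⟨ht.1, le_trans ht.2 (by norm_num)⟩
    have h2t : 2*t ∈ Set.Icc (0:ℝ) 1 := ⟨by linarith [ht.1], by linarith [ht.2]⟩
    have hP := hθP t ht1
    simp only [if_pos ht.2] at hP
    have hF := hθΦ (2*t) h2t
    have hN : 0 < vnorm ((Φ (2*t)).mulVec s) := norm_pos (hΦdet (2*t) h2t) hs2
    have rotEq : vnorm ((Φ (2*t)).mulVec s) • (rotMat (2*π*θP t)).mulVec s
        = vnorm ((Φ (2*t)).mulVec s) • (rotMat (2*π*θΦ (2*t))).mulVec s :=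
      hP.symm.trans hF
    have veq := smul_right_injective (Fin 2 → ℝ) (ne_of_gt hN) rotEq
    obtain ⟨n, hn⟩ := rot_dir_eq hs2 veq
    refine ⟨-n, ?_⟩
    have := mul_left_cancel₀ (by positivity : (2*π:ℝ) ≠ 0)
      (show (2*π) * (θΦ (2*t) - θP t) = (2*π) * n by linarith [hn])
    push_cast
    linarith [this]
  have hcont1 : ContinuousOn (fun t => θP t - θΦ (2*t)) (Set.Icc (0:ℝ) (1/2)) := by
    refine ContinuousOn.sub (hθPc.mono (Set.Icc_subset_Icc_right (by norm_num))) ?_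
    refine hθΦc.comp ((continuous_const.mul continuous_id).continuousOn) ?_
    intro t ht
    exact ⟨by simpa using by linarith [ht.1], by simpa using by linarith [ht.2]⟩
  have hhalf : θP (1/2) = θΦ 1 := by
    have := int_valued_eq (by norm_num : (0:ℝ) ≤ 1/2) hcont1 hint1
    have h0 : θP 0 - θΦ (2*0) = 0 := by norm_num [hθP0, hθΦ0]
    rw [h0] at this
    have h12 : (2:ℝ) * (1/2) = 1 := by norm_num
    rw [h12] at this
    linarith [this]
  -- The difference function g
  set g : ℝ → ℝ := fun u => θP ((u+1)/2) - θΨ u with hgdef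
  have hg0 : g 0 = θΦ 1 := by
    have : ((0:ℝ)+1)/2 = 1/2 := by norm_num
    simp only [hgdef, this, hθΨ0, sub_zero, hhalf]
  have hg1 : g 1 = θP 1 - θΨ 1 := by
    have : ((1:ℝ)+1)/2 = 1 := by norm_num
    simp only [hgdef, this]
  have hgc : ContinuousOn g (Set.Icc (0:ℝ) 1) := by
    refine ContinuousOn.sub ?_ hθΨc
    refine hθPc.comp ((by continuity : Continuous fun u : ℝ => (u+1)/2).continuousOn) ?_
    intro u hu
    exact ⟨by simpa using by linarith [hu.1], by simpa using by linarith [hu.2]⟩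
  -- Step 2: key identity
  have key : ∀ u ∈ Set.Icc (0:ℝ) 1,
      vnorm ((Ψ u).mulVec s) * vnorm ((Ψ u * Φ 1).mulVec s) * Real.sin (2*π*(g u))
        = vnorm ((Φ 1).mulVec s) * Real.sin (2*π*θΦ 1) := by
    intro u hu
    have ht : (u+1)/2 ∈ Set.Icc (0:ℝ) 1 := ⟨by linarith [hu.1], by linarith [hu.2]⟩
    have hM : (fun t => if t ≤ 1/2 then Φ (2*t) else Ψ (2*t-1) * Φ 1) ((u+1)/2)
        = Ψ u * Φ 1 := by
      show (if (u+1)/2 ≤ 1/2 then Φ (2*((u+1)/2)) else Ψ (2*((u+1)/2)-1) * Φ 1)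
        = Ψ u * Φ 1
      by_cases hcase : (u+1)/2 ≤ (1:ℝ)/2
      · have hu0 : u = 0 := le_antisymm (by linarith) hu.1
        rw [if_pos hcase, hu0, hΨ0, one_mul]
        norm_num
      · rw [if_neg hcase]
        have : 2*((u+1)/2) - 1 = u := by ring
        rw [this]
    have hP := hθP ((u+1)/2) ht
    rw [hM] at hP
    have hF1 := hθΦ 1 ⟨zero_le_one, le_refl 1⟩
    have hΨu := hθΨ u hu
    set NΦ := vnorm ((Φ 1).mulVec s) with hNΦ
    set NΨ := vnorm ((Ψ u).mulVec s) with hNΨ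
    set NP := vnorm ((Ψ u * Φ 1).mulVec s) with hNP
    have e1 : crossv ((Ψ u).mulVec s) ((Ψ u * Φ 1).mulVec s) = NΦ * Real.sin (2*π*θΦ 1) := by
      rw [← Matrix.mulVec_mulVec, crossv_mulVec, hΨdet u hu, one_mul, hF1,
        crossv_smul_right, crossv_id_rot, hs2, one_mul]
    have e2 : crossv ((Ψ u).mulVec s) ((Ψ u * Φ 1).mulVec s)
        = NΨ * NP * Real.sin (2*π*(g u)) := by
      rw [hΨu, hP, crossv_smul_smul, crossv_rot, hs2, one_mul]
      have harg : 2*π*θP ((u+1)/2) - 2*π*θΨ u = 2*π*(g u) := by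
        simp only [hgdef]; ring
      rw [harg]
    rw [← e2, e1]
  -- Step 3: conclude
  have hNΦpos : 0 < vnorm ((Φ 1).mulVec s) :=
    norm_pos (hΦdet 1 ⟨zero_le_one, le_refl 1⟩) hs2
  have habs : θP 1 - θΨ 1 - θΦ 1 = g 1 - g 0 := by rw [hg1, hg0]
  rw [habs]
  by_cases hsin : Real.sin (2*π*θΦ 1) = 0
  · -- case A: g is half-integer valued, hence constant
    have hint : ∀ u ∈ Set.Icc (0:ℝ) 1, ∃ n : ℤ, 2 * g u = n := by
      intro u hu
      have hk := key u hu
      rw [hsin, mul_zero] at hk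
      have hΨpos : 0 < vnorm ((Ψ u).mulVec s) := norm_pos (hΨdet u hu) hs2
      have hPpos : 0 < vnorm ((Ψ u * Φ 1).mulVec s) := by
        refine norm_pos ?_ hs2
        rw [Matrix.det_mul, hΨdet u hu, hΦdet 1 ⟨zero_le_one, le_refl 1⟩, one_mul]
      have hz : Real.sin (2*π*(g u)) = 0 := by
        rcases mul_eq_zero.mp hk with h | h
        · exact absurd h (by positivity)
        · exact h
      obtain ⟨n, hn⟩ := Real.sin_eq_zero_iff.mp hz
      refine ⟨n, ?_⟩
      have := mul_right_cancel₀ hpi (show (2 * g u) * π = (n:ℝ) * π by linarith [hn])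
      linarith [this]
    have h2g : 2 * g 1 = 2 * g 0 :=
      int_valued_eq (f := fun u => 2 * g u) zero_le_one (continuousOn_const.mul hgc) hint
    have : g 1 = g 0 := by linarith
    rw [this]
    simp
  · -- case B: g never takes half-integer values
    have hne : ∀ u ∈ Set.Icc (0:ℝ) 1, ∀ n : ℤ, 2 * g u ≠ n := by
      intro u hu n hcontra
      have hk := key u hu
      have harg : 2*π*(g u) = (n:ℝ) * π := by linear_combination π * hcontra
      rw [harg, Real.sin_int_mul_pi, mul_zero] at hk
      rcases mul_eq_zero.mp hk.symm with h | h
      · exact absurd h (ne_of_gt hNΦpos)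
      · exact hsin h
    exact no_half_int zero_le_one hgc hne
end

section
/- Let γ : [0,∞) → ℝⁿ be a twice continuously differentiable curve with |γ̇(t)| = 1 for all t and with image contained in a set of diameter D > 0. Then for every constant 0 < C < 1 and all T with T > C·T + 2D, one has (1/T)·∫₀ᵀ |γ̈(t)| dt ≥ C/D. -/
open intervalIntegral Metric

/-- A unit-speed `C²` curve confined to a set of diameter `D` has time-averaged
acceleration at least `C/D` for every `0 < C < 1` and all sufficiently large times `T`
(namely those with `T > C·T + 2D`). -/
theorem stmt_11 (n : ℕ) (γ : ℝ → EuclideanSpace ℝ (Fin n))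
    (hγ : ContDiff ℝ 2 γ)
    (hspeed : ∀ t : ℝ, 0 ≤ t → ‖deriv γ t‖ = 1)
    (S : Set (EuclideanSpace ℝ (Fin n))) (D : ℝ) (hD : 0 < D)
    (hmem : ∀ t : ℝ, 0 ≤ t → γ t ∈ S) (hdiam : Metric.diam S = D) :
    ∀ C : ℝ, 0 < C → C < 1 → ∀ T : ℝ, C * T + 2 * D < T →
      C / D ≤ (1 / T) * ∫ t in (0:ℝ)..T, ‖deriv (deriv γ) t‖ := by
  intro C hC hC1 T hT
  have hTpos : 0 < T := by nlinarith
  -- basic differentiability facts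
  have h2 : ContDiff ℝ (1+1) γ := by norm_num; exact hγ
  have hd1 : Differentiable ℝ γ := hγ.differentiable (by norm_num)
  have hg1 : ContDiff ℝ 1 (deriv γ) := (contDiff_succ_iff_deriv.mp h2).2.2
  have hgd : Differentiable ℝ (deriv γ) := hg1.differentiable (by norm_num)
  have hg'c : Continuous (deriv (deriv γ)) := hg1.continuous_deriv le_rfl
  set g := deriv γ with hg
  set g' := deriv g with hg'
  -- bounded
  have hbdd : Bornology.IsBounded S := by
    rw [Metric.isBounded_iff_ediam_ne_top]
    intro h
    rw [Metric.diam, h] at hdiam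
    simp at hdiam
    exact absurd hdiam (ne_of_gt hD).symm
  have hdist : ∀ t : ℝ, 0 ≤ t → ‖γ t - γ 0‖ ≤ D := by
    intro t ht
    rw [← dist_eq_norm, ← hdiam]
    exact Metric.dist_le_diam_of_mem hbdd (hmem t ht) (hmem 0 le_rfl)
  -- the function f and its derivative
  set f : ℝ → ℝ := fun t => inner ℝ (γ t - γ 0) (g t) with hf
  set F : ℝ → ℝ := fun t => (inner ℝ (γ t - γ 0) (g' t) + inner ℝ (g t : EuclideanSpace ℝ (Fin n)) (g t) : ℝ) with hF
  have hder : ∀ t : ℝ, HasDerivAt f (F t) t := by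
    intro t
    have h1 : HasDerivAt (fun s => γ s - γ 0) (g t) t := ((hd1 t).hasDerivAt).sub_const _
    have h2 : HasDerivAt g (g' t) t := (hgd t).hasDerivAt
    exact HasDerivAt.inner ℝ h1 h2
  have hcF : Continuous F := by
    have hγc : Continuous γ := hd1.continuous
    have hgc : Continuous g := hgd.continuous
    exact ((hγc.sub continuous_const).inner hg'c).add (hgc.inner hgc)
  have hFTC : ∫ t in (0:ℝ)..T, F t = f T - f 0 :=
    intervalIntegral.integral_eq_sub_of_hasDerivAt (fun t _ => hder t)
      (hcF.intervalIntegrable 0 T)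
  -- split the integral
  set φ : ℝ → ℝ := fun t => inner ℝ (γ t - γ 0) (g' t) with hφ
  have hγc : Continuous γ := hd1.continuous
  have hφc : Continuous φ := (hγc.sub continuous_const).inner hg'c
  have hgc : Continuous g := hgd.continuous
  have hψc : Continuous (fun t => (inner ℝ (g t : EuclideanSpace ℝ (Fin n)) (g t) : ℝ)) :=
    hgc.inner hgc
  have hsplit : ∫ t in (0:ℝ)..T, F t = (∫ t in (0:ℝ)..T, φ t) + ∫ t in (0:ℝ)..T,
      (inner ℝ (g t : EuclideanSpace ℝ (Fin n)) (g t) : ℝ) :=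
    intervalIntegral.integral_add (hφc.intervalIntegrable 0 T) (hψc.intervalIntegrable 0 T)
  have hone : ∫ t in (0:ℝ)..T, (inner ℝ (g t : EuclideanSpace ℝ (Fin n)) (g t) : ℝ) = T := by
    rw [intervalIntegral.integral_congr (g := fun _ => (1:ℝ)) ?_]
    · simp
    · intro t ht
      rw [Set.uIcc_of_le hTpos.le] at ht
      have := hspeed t ht.1
      simp only [real_inner_self_eq_norm_sq]
      rw [this]; norm_num
  have hf0 : f 0 = 0 := by simp [hf]
  -- bound on φ integral
  have hA0 : 0 ≤ ∫ t in (0:ℝ)..T, ‖g' t‖ :=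
    intervalIntegral.integral_nonneg hTpos.le (fun t _ => norm_nonneg _)
  have hφbound : -(D * ∫ t in (0:ℝ)..T, ‖g' t‖) ≤ ∫ t in (0:ℝ)..T, φ t := by
    have h1 : ∫ t in (0:ℝ)..T, (-(D * ‖g' t‖)) ≤ ∫ t in (0:ℝ)..T, φ t := by
      apply intervalIntegral.integral_mono_on hTpos.le
      · exact ((continuous_const.mul hg'c.norm).neg).intervalIntegrable 0 T
      · exact hφc.intervalIntegrable 0 T
      · intro t ht
        have h2 : |φ t| ≤ D * ‖g' t‖ := by
          calc |φ t| ≤ ‖γ t - γ 0‖ * ‖g' t‖ := abs_real_inner_le_norm _ _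
          _ ≤ D * ‖g' t‖ := by
            exact mul_le_mul_of_nonneg_right (hdist t ht.1) (norm_nonneg _)
        linarith [abs_le.mp h2]
    calc -(D * ∫ t in (0:ℝ)..T, ‖g' t‖) = ∫ t in (0:ℝ)..T, (-(D * ‖g' t‖)) := by
          rw [intervalIntegral.integral_neg, intervalIntegral.integral_const_mul]
    _ ≤ _ := h1
  -- bound on f T
  have hfT : f T ≤ D := by
    calc f T ≤ ‖γ T - γ 0‖ * ‖g T‖ := real_inner_le_norm _ _
    _ ≤ D * 1 := by
      apply mul_le_mul (hdist T hTpos.le) (le_of_eq (hspeed T hTpos.le)) (norm_nonneg _) hD.le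
    _ = D := mul_one D
  -- combine: T ≤ D + D * A
  have hkey : T ≤ D + D * ∫ t in (0:ℝ)..T, ‖g' t‖ := by
    have heq := hFTC
    rw [hsplit, hone, hf0, sub_zero] at heq
    linarith
  -- finish
  rw [div_le_iff₀ hD]
  have hct : C * T ≤ (∫ t in (0:ℝ)..T, ‖g' t‖) * D := by nlinarith
  have hTT : 1 / T * T = 1 := by field_simp
  nlinarith [hct, hTT, hTpos]
end

section
/- Let X ⊂ ℝ⁴ be a convex domain containing the ellipsoid E(a,b) = E(a) × E(b) in the splitting ℂ² = ℂ × ℂ (where E(a) ⊂ ℂ is the disk of area a), contained in 4·E(a,b), with smooth boundary Y, and let ν(x) denote the outward unit normal at x ∈ Y. If x ∈ Y satisfies π₂(x) ∈ E(3b/4), then |π₂(ν(x))| ≤ (4/(1 − (3/4)^{1/2}))·(a/b)^{1/2}, where π₂ : ℂ² → ℂ is the projection to the second factor. -/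
open scoped Pointwise RealInnerProductSpace

/-- The standard symplectic ellipsoid `E(a,b) ⊂ ℂ² ≅ ℝ⁴` in Euclidean coordinates, where
the first complex factor has coordinates `(x 0, x 1)` and the second `(x 2, x 3)`. -/
def stdEllipsoid (a b : ℝ) : Set (EuclideanSpace ℝ (Fin 4)) :=
  {x | Real.pi * (x 0 ^ 2 + x 1 ^ 2) / a + Real.pi * (x 2 ^ 2 + x 3 ^ 2) / b ≤ 1}

lemma cs2 (p q u v : ℝ) : p*u + q*v ≤ Real.sqrt (p^2+q^2) * Real.sqrt (u^2+v^2) := by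
  have h3 : (p*u+q*v)^2 ≤ (p^2+q^2)*(u^2+v^2) := by nlinarith [sq_nonneg (p*v - q*u)]
  calc p*u+q*v ≤ Real.sqrt ((p*u+q*v)^2) := by
        rw [Real.sqrt_sq_eq_abs]; exact le_abs_self _
    _ ≤ Real.sqrt ((p^2+q^2)*(u^2+v^2)) := Real.sqrt_le_sqrt h3
    _ = _ := Real.sqrt_mul (by positivity) _

/-- If `X` is convex with `E(a,b) ⊆ X ⊆ 4·E(a,b)`, `x` is a boundary point of `X` whose
second complex coordinate lies in `E(3b/4)` (i.e. `π|π₂(x)|² ≤ 3b/4`), and `ν` is the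
outward unit normal to `∂X` at `x` (so `⟨ν, w − x⟩ ≤ 0` for all `w ∈ X`), then
`|π₂(ν)| ≤ (4/(1 − (3/4)^{1/2}))·(a/b)^{1/2}`. -/
theorem stmt_17 (X : Set (EuclideanSpace ℝ (Fin 4))) (hX : Convex ℝ X)
    (a b : ℝ) (ha : 0 < a) (hab : a ≤ b)
    (h1 : stdEllipsoid a b ⊆ X) (h2 : X ⊆ (4:ℝ) • stdEllipsoid a b)
    (x : EuclideanSpace ℝ (Fin 4)) (hx : x ∈ frontier X)
    (hx2 : Real.pi * (x 2 ^ 2 + x 3 ^ 2) ≤ 3 * b / 4)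
    (ν : EuclideanSpace ℝ (Fin 4)) (hν : ‖ν‖ = 1)
    (hsupp : ∀ w ∈ X, ⟪ν, w - x⟫ ≤ 0) :
    Real.sqrt (ν 2 ^ 2 + ν 3 ^ 2) ≤
      (4 / (1 - Real.sqrt (3/4))) * Real.sqrt (a / b) := by
  have hπ := Real.pi_pos
  have hb : 0 < b := ha.trans_le hab
  have hs34 : Real.sqrt (3/4) < 1 := by
    rw [show (1:ℝ) = Real.sqrt 1 by simp]
    exact Real.sqrt_lt_sqrt (by norm_num) (by norm_num)
  have hden : 0 < 1 - Real.sqrt (3/4) := by linarith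
  by_cases h0 : ν 2 ^ 2 + ν 3 ^ 2 = 0
  · rw [h0, Real.sqrt_zero]; positivity
  set n := Real.sqrt (ν 2 ^ 2 + ν 3 ^ 2) with hn
  have hnpos : 0 < n := Real.sqrt_pos.mpr (lt_of_le_of_ne (by positivity) (Ne.symm h0))
  have hn2 : n ^ 2 = ν 2 ^ 2 + ν 3 ^ 2 := Real.sq_sqrt (by positivity)
  set c := Real.sqrt (b / Real.pi) / n with hc
  have hbπ : 0 < Real.sqrt (b / Real.pi) := Real.sqrt_pos.mpr (by positivity)
  have hcpos : 0 < c := div_pos hbπ hnpos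
  have hcn : (c * n) ^ 2 = b / Real.pi := by
    rw [hc, div_mul_cancel₀ _ hnpos.ne']
    exact Real.sq_sqrt (by positivity)
  set z : EuclideanSpace ℝ (Fin 4) :=
    (WithLp.equiv 2 (Fin 4 → ℝ)).symm ![0, 0, c * ν 2, c * ν 3] with hz
  have hz0 : z 0 = 0 := rfl
  have hz1 : z 1 = 0 := rfl
  have hz2 : z 2 = c * ν 2 := rfl
  have hz3 : z 3 = c * ν 3 := rfl
  -- z is in the ellipsoid
  have hzmem : z ∈ stdEllipsoid a b := by
    simp only [stdEllipsoid, Set.mem_setOf_eq, hz0, hz1, hz2, hz3]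
    have h23 : (c * ν 2) ^ 2 + (c * ν 3) ^ 2 = b / Real.pi := by
      have : (c * ν 2) ^ 2 + (c * ν 3) ^ 2 = (c * n) ^ 2 := by
        rw [mul_pow, mul_pow, mul_pow, hn2]; ring
      rw [this, hcn]
    rw [h23]
    have : Real.pi * (b / Real.pi) / b = 1 := by field_simp
    rw [this]
    simp [ha.le]
  -- x lies in 4 • E
  have hEclosed : IsClosed (stdEllipsoid a b) := by
    have : stdEllipsoid a b = (fun x : EuclideanSpace ℝ (Fin 4) =>
        Real.pi * (x 0 ^ 2 + x 1 ^ 2) / a + Real.pi * (x 2 ^ 2 + x 3 ^ 2) / b) ⁻¹' Set.Iic 1 :=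
      rfl
    rw [this]
    apply IsClosed.preimage _ isClosed_Iic
    fun_prop
  have hx4 : x ∈ (4:ℝ) • stdEllipsoid a b :=
    closure_minimal h2 (hEclosed.smul_of_ne_zero (by norm_num)) (frontier_subset_closure hx)
  obtain ⟨y, hy, hyx⟩ := Set.mem_smul_set.mp hx4
  have hxi : ∀ i, x i = 4 * y i := fun i => by rw [← hyx]; rfl
  have hy' : Real.pi * (y 0 ^ 2 + y 1 ^ 2) / a + Real.pi * (y 2 ^ 2 + y 3 ^ 2) / b ≤ 1 := hy
  have hA : Real.pi * (y 0 ^ 2 + y 1 ^ 2) ≤ a := by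
    have h2nn : 0 ≤ Real.pi * (y 2 ^ 2 + y 3 ^ 2) / b := by positivity
    have : Real.pi * (y 0 ^ 2 + y 1 ^ 2) / a ≤ 1 := by linarith
    rwa [div_le_one ha] at this
  have hx01 : x 0 ^ 2 + x 1 ^ 2 ≤ 16 * (a / Real.pi) := by
    rw [hxi 0, hxi 1]
    have : y 0 ^ 2 + y 1 ^ 2 ≤ a / Real.pi := by
      rw [le_div_iff₀ hπ]; linarith
    nlinarith
  have hsx01 : Real.sqrt (x 0 ^ 2 + x 1 ^ 2) ≤ 4 * Real.sqrt (a / Real.pi) := by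
    calc Real.sqrt (x 0 ^ 2 + x 1 ^ 2) ≤ Real.sqrt (16 * (a / Real.pi)) :=
          Real.sqrt_le_sqrt hx01
      _ = 4 * Real.sqrt (a / Real.pi) := by
          rw [Real.sqrt_mul (by norm_num), show (16:ℝ) = 4 ^ 2 by norm_num,
            Real.sqrt_sq (by norm_num : (0:ℝ) ≤ 4)]
  have hsx23 : Real.sqrt (x 2 ^ 2 + x 3 ^ 2) ≤ Real.sqrt (3/4) * Real.sqrt (b / Real.pi) := by
    calc Real.sqrt (x 2 ^ 2 + x 3 ^ 2) ≤ Real.sqrt ((3/4) * (b / Real.pi)) := by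
          apply Real.sqrt_le_sqrt
          rw [show (3:ℝ)/4 * (b / Real.pi) = (3 * b / 4) / Real.pi by ring, le_div_iff₀ hπ]
          linarith
      _ = Real.sqrt (3/4) * Real.sqrt (b / Real.pi) := Real.sqrt_mul (by norm_num) _
  -- norm of ν in coordinates
  have hνsum : ν 0 ^ 2 + ν 1 ^ 2 + ν 2 ^ 2 + ν 3 ^ 2 = 1 := by
    have := hν
    rw [EuclideanSpace.norm_eq, Real.sqrt_eq_one] at this
    simpa [Fin.sum_univ_four, Real.norm_eq_abs, sq_abs] using this
  have hsν01 : Real.sqrt (ν 0 ^ 2 + ν 1 ^ 2) ≤ 1 := by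
    rw [show (1:ℝ) = Real.sqrt 1 by simp]
    apply Real.sqrt_le_sqrt
    linarith [sq_nonneg (ν 2), sq_nonneg (ν 3)]
  -- the supporting hyperplane inequality at z
  have hkey := hsupp z (h1 hzmem)
  have hinner : ⟪ν, z - x⟫ = ν 0 * (z 0 - x 0) + ν 1 * (z 1 - x 1)
      + ν 2 * (z 2 - x 2) + ν 3 * (z 3 - x 3) := by
    simp [PiLp.inner_apply, RCLike.inner_apply, Fin.sum_univ_four, PiLp.sub_apply]
    ring
  rw [hinner, hz0, hz1, hz2, hz3] at hkey
  -- combine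
  have e1 : ν 0 * x 0 + ν 1 * x 1 ≤ 4 * Real.sqrt (a / Real.pi) := by
    calc ν 0 * x 0 + ν 1 * x 1
        ≤ Real.sqrt (ν 0 ^ 2 + ν 1 ^ 2) * Real.sqrt (x 0 ^ 2 + x 1 ^ 2) := cs2 _ _ _ _
      _ ≤ 1 * (4 * Real.sqrt (a / Real.pi)) := by
          apply mul_le_mul hsν01 hsx01 (Real.sqrt_nonneg _) (by norm_num)
      _ = 4 * Real.sqrt (a / Real.pi) := one_mul _
  have e2 : ν 2 * x 2 + ν 3 * x 3 ≤ n * (Real.sqrt (3/4) * Real.sqrt (b / Real.pi)) := by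
    calc ν 2 * x 2 + ν 3 * x 3
        ≤ Real.sqrt (ν 2 ^ 2 + ν 3 ^ 2) * Real.sqrt (x 2 ^ 2 + x 3 ^ 2) := cs2 _ _ _ _
      _ ≤ n * (Real.sqrt (3/4) * Real.sqrt (b / Real.pi)) :=
          mul_le_mul_of_nonneg_left hsx23 hnpos.le
  have hcn2 : c * (ν 2 ^ 2 + ν 3 ^ 2) = Real.sqrt (b / Real.pi) * n := by
    rw [← hn2, hc]
    field_simp
  have key : Real.sqrt (b / Real.pi) * n
      ≤ 4 * Real.sqrt (a / Real.pi) + n * (Real.sqrt (3/4) * Real.sqrt (b / Real.pi)) := by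
    linarith [hkey, hcn2, e1, e2]
  -- conclude
  rw [div_mul_eq_mul_div, le_div_iff₀ hden]
  have hab' : Real.sqrt (a / b) * Real.sqrt (b / Real.pi) = Real.sqrt (a / Real.pi) := by
    rw [← Real.sqrt_mul (by positivity)]
    congr 1
    field_simp
  have hfin : n * (1 - Real.sqrt (3/4)) * Real.sqrt (b / Real.pi)
      ≤ 4 * Real.sqrt (a / b) * Real.sqrt (b / Real.pi) := by
    linarith [key, hab']

  exact le_of_mul_le_mul_right hfin hbπ
end
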